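/- Let d = 3 and b_λ = p⊗p⊗p + λ(p⊗q⊗q + q⊗p⊗q + q⊗q⊗p) with ‖p‖ = ‖q‖ = 1, ⟨p,q⟩ = 0, λ ≥ 0. For p_α = p + α q, the stationarity condition (Id ⊗ p_α ⊗ p_α)ᵀ b_λ = C p_α for some C ∈ ℝ is equivalent to 2λα/(1 + λα²) = α, whose real solutions are α = 0 if λ ≤ 1/2, and α ∈ {0, ±√((2λ−1)/λ)} if λ > 1/2. -/

import Mathlib

open scoped BigOperators

/-- Elementary (rank-one) order-3 tensor `u ⊗ v ⊗ w` on `ℝⁿ ⊗ ℝⁿ ⊗ ℝⁿ`. -/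
noncomputable def t3 {n : ℕ} (u v w : EuclideanSpace ℝ (Fin n)) :
    EuclideanSpace ℝ (Fin n × Fin n × Fin n) :=
  WithLp.toLp 2 (fun i : Fin n × Fin n × Fin n => u i.1 * v i.2.1 * w i.2.2)

/-- The tensor `b_λ = p⊗p⊗p + λ(p⊗q⊗q + q⊗p⊗q + q⊗q⊗p)`. -/
noncomputable def bLam {n : ℕ} (p q : EuclideanSpace ℝ (Fin n)) (lam : ℝ) :
    EuclideanSpace ℝ (Fin n × Fin n × Fin n) :=
  t3 p p p + lam • (t3 p q q + t3 q p q + t3 q q p)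

/-- Contraction of an order-3 tensor in the second and third modes:
`((Id ⊗ x ⊗ y)ᵀ b)_i = Σ_{j,k} b_{ijk} x_j y_k`. -/
noncomputable def contr23 {n : ℕ} (b : EuclideanSpace ℝ (Fin n × Fin n × Fin n))
    (x y : EuclideanSpace ℝ (Fin n)) : EuclideanSpace ℝ (Fin n) :=
  WithLp.toLp 2 (fun i => ∑ j, ∑ k, b (i, j, k) * x j * y k)

lemma contr23_t3 {n : ℕ} (u v w x y : EuclideanSpace ℝ (Fin n)) :
    contr23 (t3 u v w) x y = ((∑ j, v j * x j) * (∑ k, w k * y k)) • u := by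
  ext i
  simp only [contr23, t3, PiLp.toLp_apply, PiLp.smul_apply, smul_eq_mul, Finset.sum_mul_sum, Finset.sum_mul,
    Finset.mul_sum]
  rw [Finset.sum_comm]
  exact Finset.sum_congr rfl fun j _ => Finset.sum_congr rfl fun k _ => by ring

lemma contr23_eval {n : ℕ} (p q : EuclideanSpace ℝ (Fin n))
    (hpp : ∑ j, p j * p j = 1) (hqq : ∑ j, q j * q j = 1)
    (hpq : ∑ j, p j * q j = 0) (lam α : ℝ) :
    contr23 (bLam p q lam) (p + α • q) (p + α • q)
      = (1 + lam * α ^ 2) • p + (2 * lam * α) • q := by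
  have hqp : ∑ j, q j * p j = 0 := by
    rw [← hpq]; exact Finset.sum_congr rfl fun j _ => mul_comm _ _
  have hadd : ∀ (b c : EuclideanSpace ℝ (Fin n × Fin n × Fin n))
      (x y : EuclideanSpace ℝ (Fin n)),
      contr23 (b + c) x y = contr23 b x y + contr23 c x y := by
    intro b c x y
    ext i
    simp [contr23, add_mul, Finset.sum_add_distrib]
  have hsmul : ∀ (c : ℝ) (b : EuclideanSpace ℝ (Fin n × Fin n × Fin n))
      (x y : EuclideanSpace ℝ (Fin n)),
      contr23 (c • b) x y = c • contr23 b x y := by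
    intro c b x y
    ext i
    simp [contr23, Finset.mul_sum, mul_assoc]
  have hsp : ∑ j, p j * (p + α • q) j = 1 := by
    simp [Finset.sum_add_distrib, mul_add, mul_left_comm, ← Finset.mul_sum, hpp, hpq]
  have hsq : ∑ j, q j * (p + α • q) j = α := by
    simp [Finset.sum_add_distrib, mul_add, mul_left_comm, ← Finset.mul_sum, hqq, hqp]
  rw [bLam, hadd, hsmul, hadd, hadd]
  rw [contr23_t3, contr23_t3, contr23_t3, contr23_t3, hsp, hsq]
  ext i
  simp only [PiLp.add_apply, PiLp.smul_apply, smul_eq_mul]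
  ring

/-- For `p_α = p + α q`, the stationarity condition `(Id ⊗ p_α ⊗ p_α)ᵀ b_λ = C p_α` is
equivalent to `2λα = α(1 + λα²)`, whose real solutions are `α = 0` if `λ ≤ 1/2` and
`α ∈ {0, ±√((2λ−1)/λ)}` if `λ > 1/2`. -/
theorem stmt12 {n : ℕ} (p q : EuclideanSpace ℝ (Fin n))
    (hp : ‖p‖ = 1) (hq : ‖q‖ = 1) (hpq : (inner ℝ p q : ℝ) = 0)
    (lam : ℝ) (hlam : 0 ≤ lam) (α : ℝ) :
    ((∃ C : ℝ, contr23 (bLam p q lam) (p + α • q) (p + α • q) = C • (p + α • q)) ↔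
        2 * lam * α = α * (1 + lam * α ^ 2)) ∧
      (2 * lam * α = α * (1 + lam * α ^ 2) ↔
        (α = 0 ∨ (1 / 2 < lam ∧
          (α = Real.sqrt ((2 * lam - 1) / lam) ∨ α = -Real.sqrt ((2 * lam - 1) / lam))))) := by
  have hqp : (inner ℝ q p : ℝ) = 0 := by rw [real_inner_comm]; exact hpq
  have hipp : (inner ℝ p p : ℝ) = 1 := by
    rw [real_inner_self_eq_norm_sq, hp]; norm_num
  have hiqq : (inner ℝ q q : ℝ) = 1 := by
    rw [real_inner_self_eq_norm_sq, hq]; norm_num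
  have hpp : ∑ j, p j * p j = 1 := by
    rw [← hipp, PiLp.inner_apply]; exact Finset.sum_congr rfl fun j _ => by simp only [RCLike.inner_apply, conj_trivial, mul_comm]
  have hqq : ∑ j, q j * q j = 1 := by
    rw [← hiqq, PiLp.inner_apply]; exact Finset.sum_congr rfl fun j _ => by simp only [RCLike.inner_apply, conj_trivial, mul_comm]
  have hpq' : ∑ j, p j * q j = 0 := by
    rw [← hpq, PiLp.inner_apply]; exact Finset.sum_congr rfl fun j _ => by simp only [RCLike.inner_apply, conj_trivial, mul_comm]
  have hev := contr23_eval p q hpp hqq hpq' lam α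
  constructor
  · constructor
    · rintro ⟨C, hC⟩
      rw [hev] at hC
      have h1 : 1 + lam * α ^ 2 = C := by
        have ip := congrArg (fun v => (inner ℝ p v : ℝ)) hC
        simpa [inner_add_right, inner_smul_right, hipp, hpq, hp] using ip
      have h2 : 2 * lam * α = C * α := by
        have ip := congrArg (fun v => (inner ℝ q v : ℝ)) hC
        simpa [inner_add_right, inner_smul_right, hiqq, hqp, hq, mul_comm] using ip
      rw [h2, ← h1]; ring
    · intro h
      refine ⟨1 + lam * α ^ 2, ?_⟩
      rw [hev]
      have h2 : (2 * lam * α) = (1 + lam * α ^ 2) * α := by linarith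
      rw [smul_add, h2, smul_smul]
  · constructor
    · intro h
      have h0 : α * (1 + lam * α ^ 2 - 2 * lam) = 0 := by ring_nf; linarith
      rcases mul_eq_zero.1 h0 with h1 | h1
      · exact Or.inl h1
      · have hsq : lam * α ^ 2 = 2 * lam - 1 := by linarith
        rcases le_or_gt lam (1 / 2) with hle | hgt
        · left
          have h2 : lam * α ^ 2 ≤ 0 := by linarith
          have h3 : 0 ≤ lam * α ^ 2 := mul_nonneg hlam (sq_nonneg α)
          have h4 : lam * α ^ 2 = 0 := le_antisymm h2 h3
          have hl : lam = 1 / 2 := by linarith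
          have h5 : α ^ 2 = 0 := by rw [hl] at h4; linarith
          exact pow_eq_zero_iff (n := 2) (by norm_num) |>.1 h5
        · right
          refine ⟨hgt, ?_⟩
          have hlne : lam ≠ 0 := by linarith
          have ha2 : α ^ 2 = (2 * lam - 1) / lam := by
            field_simp
            linarith
          have habs : Real.sqrt ((2 * lam - 1) / lam) = |α| := by
            rw [← ha2, Real.sqrt_sq_eq_abs]
          rcases abs_cases α with ⟨h5, _⟩ | ⟨h5, _⟩
          · left; rw [habs, h5]
          · right; rw [habs, h5, neg_neg]
    · rintro (h | ⟨hgt, h | h⟩)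
      · rw [h]; ring
      · have hlne : lam ≠ 0 := by linarith
        have hnn : 0 ≤ (2 * lam - 1) / lam := div_nonneg (by linarith) (by linarith)
        have ha2 : α ^ 2 = (2 * lam - 1) / lam := by
          rw [h, Real.sq_sqrt hnn]
        have hsq : lam * α ^ 2 = 2 * lam - 1 := by
          rw [ha2]; field_simp
        linear_combination (-α) * hsq
      · have hlne : lam ≠ 0 := by linarith
        have hnn : 0 ≤ (2 * lam - 1) / lam := div_nonneg (by linarith) (by linarith)
        have ha2 : α ^ 2 = (2 * lam - 1) / lam := by
          rw [h, neg_sq, Real.sq_sqrt hnn]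
        have hsq : lam * α ^ 2 = 2 * lam - 1 := by
          rw [ha2]; field_simp
        linear_combination (-α) * hsq
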